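/- Let 1 ≤ k ≤ N and M = C(N,k). For every sequence w_1, w_2, …, w_M that lists each k-of-N code exactly once, the total Hamming cost Σ_{t=1}^{M−1} h(w_t, w_{t+1}) is at least 2(M−1); moreover this minimum is attained: there is an enumeration of all k-of-N codes (the Gray-code enumeration) whose consecutive Hamming distances are all exactly 2, so its total Hamming cost equals 2(M−1). -/

import Mathlib

/-- A `k`-of-`N` code: a bit vector of length `N` with exactly `k` ones. -/
def isKofN (N k : ℕ) (x : Fin N → Bool) : Prop :=
  ((Finset.univ : Finset (Fin N)).filter (fun i => x i = true)).card = k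

section GrayAux
open Finset symmDiff


def gray : ℕ → ℕ → List (Finset ℕ)
  | _, 0 => [∅]
  | 0, _+1 => []
  | n+1, k+1 => gray n (k+1) ++ ((gray n k).reverse.map (insert n))

lemma mem_gray {n k : ℕ} {s : Finset ℕ} (h : s ∈ gray n k) :
    s ⊆ Finset.range n ∧ s.card = k := by
  induction n generalizing k s with
  | zero => cases k with
    | zero => simp [gray] at h; simp [h]
    | succ k => simp [gray] at h
  | succ n ih =>
    cases k with
    | zero => simp [gray] at h; simp [h]
    | succ k =>
      simp only [gray, List.mem_append, List.mem_map, List.mem_reverse] at h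
      rcases h with h | ⟨t, ht, rfl⟩
      · obtain ⟨h1, h2⟩ := ih h
        exact ⟨h1.trans (by simp [Finset.range_subset]; intros; omega), h2⟩
      · obtain ⟨h1, h2⟩ := ih ht
        have hn : n ∉ t := fun hc => by simpa using h1 hc
        constructor
        · intro x hx
          rcases Finset.mem_insert.1 hx with rfl | hx
          · simp
          · exact Finset.mem_range.2 ((Finset.mem_range.1 (h1 hx)).trans (Nat.lt_succ_self n))
        · rw [Finset.card_insert_of_notMem hn, h2]

lemma not_mem_gray {n k : ℕ} {s : Finset ℕ} (h : s ∈ gray n k) : n ∉ s :=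
  fun hc => by simpa using (mem_gray h).1 hc

lemma length_gray (n k : ℕ) : (gray n k).length = n.choose k := by
  induction n generalizing k with
  | zero => cases k <;> simp [gray, List.Chain']
  | succ n ih =>
    cases k with
    | zero => simp [gray]
    | succ k => simp [gray, ih, Nat.choose_succ_succ', Nat.add_comm]

lemma nodup_gray (n k : ℕ) : (gray n k).Nodup := by
  induction n generalizing k with
  | zero => cases k <;> simp [gray]
  | succ n ih =>
    cases k with
    | zero => simp [gray]
    | succ k =>
      simp only [gray]
      refine List.Nodup.append (ih _) (List.Nodup.map_on ?_ (List.nodup_reverse.2 (ih _))) ?_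
      · intro s hs t ht hst
        have hns := not_mem_gray (List.mem_reverse.1 hs)
        have hnt := not_mem_gray (List.mem_reverse.1 ht)
        have := congrArg (fun u => Finset.erase u n) hst
        simpa [Finset.erase_insert hns, Finset.erase_insert hnt] using this
      · intro s hs hs2
        rcases List.mem_map.1 hs2 with ⟨t, ht, rfl⟩
        exact not_mem_gray hs (Finset.mem_insert_self n t)

lemma gray_ne_nil {n k : ℕ} (h : k ≤ n) : gray n k ≠ [] := by
  have := length_gray n k
  intro hc; rw [hc] at this
  exact absurd this.symm (Nat.choose_pos h).ne'

lemma gray_self (k : ℕ) : gray k k = [Finset.range k] := by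
  induction k with
  | zero => simp [gray]
  | succ k ih =>
    have h1 : gray k (k+1) = [] :=
      List.length_eq_zero_iff.1 (by rw [length_gray, Nat.choose_eq_zero_of_lt (Nat.lt_succ_self k)])
    simp [gray, h1, ih, Finset.range_add_one]

lemma head?_gray {n k : ℕ} (h : k ≤ n) : (gray n k).head? = some (Finset.range k) := by
  induction n generalizing k with
  | zero => interval_cases k; simp [gray]
  | succ n ih =>
    cases k with
    | zero => simp [gray]
    | succ k =>
      rcases Nat.lt_or_ge k n with hkn | hkn
      · have h1 : gray n (k+1) ≠ [] := gray_ne_nil hkn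
        simp only [gray]
        rw [List.head?_append_of_ne_nil _ h1]  -- name?
        exact ih hkn
      · -- k ≥ n, and k+1 ≤ n+1 so k ≤ n, hence k = n
        have hk : k = n := le_antisymm (Nat.succ_le_succ_iff.1 h) hkn
        subst hk
        have h1 : gray k (k+1) = [] := by
          have := length_gray k (k+1)
          rw [Nat.choose_eq_zero_of_lt (Nat.lt_succ_self k)] at this
          exact List.length_eq_zero_iff.1 this
        simp only [gray, h1, List.nil_append]
        rw [gray_self]
        simp [Finset.range_add_one]

lemma getLast?_gray {n k : ℕ} (h : k ≤ n) :
    (gray (n+1) (k+1)).getLast? = some (insert n (Finset.range k)) := by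
  have h2 : ((gray n k).reverse.map (insert n)) ≠ [] := by
    simp [gray_ne_nil h]
  simp only [gray]
  rw [List.getLast?_append_of_ne_nil _ h2, List.getLast?_map, List.getLast?_reverse,
    head?_gray h]
  rfl

lemma symmDiff_insert_insert {a b : ℕ} (s : Finset ℕ) (ha : a ∉ s) (hb : b ∉ s)
    (hab : a ≠ b) : (insert a s) ∆ (insert b s) = ({a, b} : Finset ℕ) := by
  ext x
  by_cases hx1 : x = a
  · subst hx1; simp [Finset.mem_symmDiff, ha, hb, hab]
  by_cases hx2 : x = b
  · subst hx2; simp [Finset.mem_symmDiff, ha, hb, hab, Ne.symm hab]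
  · simp only [Finset.mem_symmDiff, Finset.mem_insert, Finset.mem_singleton, hx1, hx2]
    tauto

lemma symmDiff_insert_same {n : ℕ} {s t : Finset ℕ} (hs : n ∉ s) (ht : n ∉ t) :
    (insert n s) ∆ (insert n t) = s ∆ t := by
  ext x
  by_cases hx : x = n
  · subst hx; simp [Finset.mem_symmDiff, hs, ht]
  · simp only [Finset.mem_symmDiff, Finset.mem_insert, hx, false_or]

lemma card_pair_two {a b : ℕ} (hab : a ≠ b) : ({a, b} : Finset ℕ).card = 2 := by
  rw [Finset.card_insert_of_notMem (by simpa using hab), Finset.card_singleton]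

theorem List.chain'_append {α} {R : α → α → Prop} {l₁ l₂ : List α} :
    List.Chain' R (l₁ ++ l₂) ↔ List.Chain' R l₁ ∧ List.Chain' R l₂ ∧ ∀ x ∈ l₁.getLast?, ∀ y ∈ l₂.head?, R x y :=
  List.isChain_append
theorem List.chain'_map {α β} {R : α → α → Prop} (f : β → α) {l : List β} :
    List.Chain' R (l.map f) ↔ List.Chain' (fun a b => R (f a) (f b)) l := List.isChain_map f
theorem List.chain'_reverse {α} {R : α → α → Prop} {l : List α} :
    List.Chain' R l.reverse ↔ List.Chain' (fun a b => R b a) l := List.isChain_reverse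
theorem List.chain'_iff_get {α} {R : α → α → Prop} {l : List α} :
    List.Chain' R l ↔ ∀ (i : ℕ) (h : i < l.length - 1),
      R (l.get ⟨i, by omega⟩) (l.get ⟨i + 1, by omega⟩) := by
  unfold List.Chain'
  rw [List.isChain_iff_getElem]
  exact ⟨fun h i hi => h i (by omega), fun h i hi => h i (by omega)⟩

lemma chain'_gray (n k : ℕ) :
    List.Chain' (fun s t => (s ∆ t).card = 2) (gray n k) := by
  induction n generalizing k with
  | zero => cases k <;> simp [gray, List.Chain']
  | succ n ih =>
    cases k with
    | zero => simp [gray, List.Chain']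
    | succ k =>
      simp only [gray]
      rw [List.chain'_append]
      refine ⟨ih _, ?_, ?_⟩
      · rw [List.chain'_map, List.chain'_reverse]
        have h0 := ih k
        rw [List.chain'_iff_get] at h0 ⊢
        intro i hi
        have h1 := h0 i hi
        have hm1 := not_mem_gray (List.get_mem (gray n k) ⟨i, by omega⟩)
        have hm2 := not_mem_gray (List.get_mem (gray n k) ⟨i+1, by omega⟩)
        show (insert n ((gray n k).get ⟨i+1, by omega⟩) ∆
            insert n ((gray n k).get ⟨i, by omega⟩)).card = 2
        rw [symmDiff_insert_same hm2 hm1, symmDiff_comm]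
        exact h1
      · intro x hx y hy
        rcases Nat.lt_or_ge k n with hkn | hkn
        · -- k + 1 ≤ n
          obtain ⟨m, rfl⟩ : ∃ m, n = m + 1 := ⟨n - 1, by omega⟩
          have hx' : x = insert m (Finset.range k) := by
            have := getLast?_gray (show k ≤ m by omega)
            rw [this] at hx; exact (Option.mem_some_iff.1 hx).symm
          rw [List.head?_map, List.head?_reverse] at hy
          cases k with
          | zero =>
            have hy' : y = insert (m+1) (∅ : Finset ℕ) := by
              have : gray (m+1) 0 = [∅] := rfl
              rw [this] at hy
              simpa using (Option.mem_some_iff.1 hy).symm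
            rw [hx', hy']
            have : Finset.range 0 = (∅ : Finset ℕ) := rfl
            rw [this, symmDiff_insert_insert _ (by simp) (by simp) (by omega)]
            exact card_pair_two (by omega)
          | succ j =>
            have hy' : y = insert (m+1) (insert m (Finset.range j)) := by
              rw [getLast?_gray (show j ≤ m by omega)] at hy
              simpa using (Option.mem_some_iff.1 hy).symm
            have hx'' : x = insert j (insert m (Finset.range j)) := by
              rw [hx', Finset.range_add_one, Finset.insert_comm]
            rw [hx'', hy',
              symmDiff_insert_insert _
                (by simp [Finset.mem_range]; omega) (by simp [Finset.mem_range]; omega)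
                (by omega)]
            exact card_pair_two (by omega)
        · -- n < k+1 : left list is empty, contradiction
          have h1 : gray n (k+1) = [] :=
            List.length_eq_zero_iff.1
              (by rw [length_gray, Nat.choose_eq_zero_of_lt (by omega)])
          rw [h1] at hx
          simp at hx

def toBV (N : ℕ) (s : Finset ℕ) : Fin N → Bool := fun i => decide (i.1 ∈ s)


lemma card_filter_toBV {N : ℕ} {s : Finset ℕ} (hs : s ⊆ Finset.range N) :
    ((Finset.univ : Finset (Fin N)).filter (fun i => toBV N s i = true)).card = s.card := by
  apply Finset.card_bij (fun i _ => i.1)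
  · intro i hi
    simpa [toBV] using (Finset.mem_filter.1 hi).2
  · intro a _ b _ h
    exact Fin.val_injective h
  · intro a ha
    have haN : a < N := Finset.mem_range.1 (hs ha)
    exact ⟨⟨a, haN⟩, by simp [toBV, ha], rfl⟩

lemma hamming_toBV {N : ℕ} {s t : Finset ℕ} (hs : s ⊆ Finset.range N)
    (ht : t ⊆ Finset.range N) :
    hammingDist (toBV N s) (toBV N t) = (s ∆ t).card := by
  rw [hammingDist]
  apply Finset.card_bij (fun i _ => i.1)
  · intro i hi
    have : toBV N s i ≠ toBV N t i := by simpa using (Finset.mem_filter.1 hi).2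
    simp only [toBV, ne_eq, decide_eq_decide] at this
    simp only [Finset.mem_symmDiff]
    tauto
  · intro a _ b _ h
    exact Fin.val_injective h
  · intro a ha
    rw [Finset.mem_symmDiff] at ha
    have haN : a < N := by
      rcases ha with ⟨h1, _⟩ | ⟨h1, _⟩
      · exact Finset.mem_range.1 (hs h1)
      · exact Finset.mem_range.1 (ht h1)
    refine ⟨⟨a, haN⟩, ?_, rfl⟩
    simp only [Finset.mem_filter, Finset.mem_univ, true_and, toBV, ne_eq,
      decide_eq_decide]
    tauto

lemma toBV_inj {N : ℕ} {s t : Finset ℕ} (hs : s ⊆ Finset.range N)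
    (ht : t ⊆ Finset.range N) (h : toBV N s = toBV N t) : s = t := by
  ext a
  constructor
  · intro hma
    have haN : a < N := Finset.mem_range.1 (hs hma)
    have := congrFun h ⟨a, haN⟩
    simp only [toBV, decide_eq_decide] at this
    exact this.1 hma
  · intro hma
    have haN : a < N := Finset.mem_range.1 (ht hma)
    have := congrFun h ⟨a, haN⟩
    simp only [toBV, decide_eq_decide] at this
    exact this.2 hma

lemma mem_gray_of {N k : ℕ} {s : Finset ℕ} (hs : s ⊆ Finset.range N)
    (hc : s.card = k) : s ∈ gray N k := by
  have h1 : (gray N k).toFinset ⊆ Finset.powersetCard k (Finset.range N) := by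
    intro t ht
    rw [List.mem_toFinset] at ht
    exact Finset.mem_powersetCard.2 (mem_gray ht)
  have h2 : (gray N k).toFinset = Finset.powersetCard k (Finset.range N) := by
    apply Finset.eq_of_subset_of_card_le h1
    rw [Finset.card_powersetCard, Finset.card_range,
      List.toFinset_card_of_nodup (nodup_gray N k), length_gray]
  rw [← List.mem_toFinset, h2]
  exact Finset.mem_powersetCard.2 ⟨hs, hc⟩

lemma two_le_hamming {N k : ℕ} {x y : Fin N → Bool} (hx : isKofN N k x)
    (hy : isKofN N k y) (hne : x ≠ y) : 2 ≤ hammingDist x y := by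
  classical
  set A := (Finset.univ : Finset (Fin N)).filter (fun i => x i = true) with hA
  set B := (Finset.univ : Finset (Fin N)).filter (fun i => y i = true) with hB
  have hfilter : ((Finset.univ : Finset (Fin N)).filter (fun i => x i ≠ y i)) = A ∆ B := by
    ext i
    simp only [Finset.mem_filter, Finset.mem_univ, true_and, Finset.mem_symmDiff, hA, hB,
      Finset.mem_filter]
    cases hxi : x i <;> cases hyi : y i <;> simp
  have hd : hammingDist x y = (A ∆ B).card := by
    rw [hammingDist]
    congr 1
  have hAB : A ≠ B := by
    intro hc
    apply hne
    funext i
    have : i ∈ A ↔ i ∈ B := by rw [hc]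
    simp only [hA, hB, Finset.mem_filter, Finset.mem_univ, true_and] at this
    cases hxi : x i <;> cases hyi : y i <;> simp_all
  have hpos : 1 ≤ (A ∆ B).card := by
    rw [Nat.one_le_iff_ne_zero, Ne, Finset.card_eq_zero]
    intro hc
    refine hAB (Finset.ext fun i => ?_)
    have := Finset.eq_empty_iff_forall_notMem.1 hc i
    rw [Finset.mem_symmDiff] at this
    tauto
  have hsd : A ∆ B = (A ∪ B) \ (A ∩ B) := symmDiff_eq_sup_sdiff_inf A B
  have hsub : A ∩ B ⊆ A ∪ B := (Finset.inter_subset_left).trans Finset.subset_union_left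
  have h1 : (A ∆ B).card + (A ∩ B).card = (A ∪ B).card := by
    rw [hsd]; exact Finset.card_sdiff_add_card_eq_card hsub
  have h2 : (A ∪ B).card + (A ∩ B).card = A.card + B.card :=
    Finset.card_union_add_card_inter A B
  rw [hd]
  have hcA : A.card = k := hx
  have hcB : B.card = k := hy
  omega

lemma toBV_support {N k : ℕ} {x : Fin N → Bool} (hx : isKofN N k x) :
    ∃ s : Finset ℕ, s ⊆ Finset.range N ∧ s.card = k ∧ toBV N s = x := by
  refine ⟨((Finset.univ : Finset (Fin N)).filter (fun i => x i = true)).image Fin.val,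
    ?_, ?_, ?_⟩
  · intro a ha
    obtain ⟨i, _, rfl⟩ := Finset.mem_image.1 ha
    exact Finset.mem_range.2 i.2
  · rw [Finset.card_image_of_injective _ Fin.val_injective]; exact hx
  · funext i
    simp only [toBV]
    by_cases hxi : x i = true
    · rw [hxi]
      simp only [decide_eq_true_eq, Finset.mem_image]
      exact ⟨i, by simp [hxi], rfl⟩
    · have : x i = false := by cases h : x i <;> simp_all
      rw [this, decide_eq_false_iff_not]
      intro hc
      obtain ⟨j, hj, hji⟩ := Finset.mem_image.1 hc
      have : j = i := Fin.val_injective hji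
      subst this
      simp_all [Finset.mem_filter]

end GrayAux

open Finset symmDiff in
/-- Let `1 ≤ k ≤ N` and `M = C(N,k)`. Every sequence `w_0, …, w_{M-1}` listing each
`k`-of-`N` code exactly once has total Hamming cost `∑_{t<M-1} h(w_t, w_{t+1})`
at least `2(M−1)`; moreover, the minimum is attained by an enumeration whose
consecutive Hamming distances are all exactly `2`, of total Hamming cost `2(M−1)`. -/
theorem total_hamming_cost_min (N k : ℕ) (hk : 1 ≤ k) (hkN : k ≤ N) :
    (∀ w : ℕ → (Fin N → Bool),
      (∀ t < N.choose k, isKofN N k (w t)) →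
      (∀ s < N.choose k, ∀ t < N.choose k, w s = w t → s = t) →
      (∀ x : Fin N → Bool, isKofN N k x → ∃ t < N.choose k, w t = x) →
      2 * (N.choose k - 1) ≤
        ∑ t ∈ Finset.range (N.choose k - 1), hammingDist (w t) (w (t + 1))) ∧
    (∃ w : ℕ → (Fin N → Bool),
      (∀ t < N.choose k, isKofN N k (w t)) ∧
      (∀ s < N.choose k, ∀ t < N.choose k, w s = w t → s = t) ∧
      (∀ x : Fin N → Bool, isKofN N k x → ∃ t < N.choose k, w t = x) ∧
      (∀ t, t + 1 < N.choose k → hammingDist (w t) (w (t + 1)) = 2) ∧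
      ∑ t ∈ Finset.range (N.choose k - 1), hammingDist (w t) (w (t + 1))
        = 2 * (N.choose k - 1)) := by
  have hlen := length_gray N k
  constructor
  · intro w hw1 hw2 hw3
    have key : ∀ t ∈ Finset.range (N.choose k - 1),
        2 ≤ hammingDist (w t) (w (t + 1)) := by
      intro t ht
      rw [Finset.mem_range] at ht
      have ht1 : t < N.choose k := by omega
      have ht2 : t + 1 < N.choose k := by omega
      refine two_le_hamming (hw1 t ht1) (hw1 (t+1) ht2) fun hc => ?_
      exact absurd (hw2 t ht1 (t+1) ht2 hc) (by omega)
    calc 2 * (N.choose k - 1) = ∑ _t ∈ Finset.range (N.choose k - 1), 2 := by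
          rw [Finset.sum_const, Finset.card_range, smul_eq_mul, Nat.mul_comm]
      _ ≤ _ := Finset.sum_le_sum key
  · refine ⟨fun t => toBV N ((gray N k).getD t ∅), ?_, ?_, ?_, ?_, ?_⟩
    · intro t ht
      have htl : t < (gray N k).length := by omega
      have hmem : (gray N k).getD t ∅ ∈ gray N k := by
        rw [List.getD_eq_getElem _ _ htl]
        exact List.getElem_mem htl
      obtain ⟨h1, h2⟩ := mem_gray hmem
      show ((Finset.univ : Finset (Fin N)).filter _).card = k
      rw [card_filter_toBV h1, h2]
    · intro s hs t ht hst
      have hsl : s < (gray N k).length := by omega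
      have htl : t < (gray N k).length := by omega
      beta_reduce at hst
      rw [List.getD_eq_getElem _ _ hsl, List.getD_eq_getElem _ _ htl] at hst
      have h1 := (mem_gray (List.getElem_mem hsl)).1
      have h2 := (mem_gray (List.getElem_mem htl)).1
      exact ((nodup_gray N k).getElem_inj_iff).1 (toBV_inj h1 h2 hst)
    · intro x hx
      obtain ⟨s, hs1, hs2, hs3⟩ := toBV_support hx
      have hmem := mem_gray_of hs1 hs2
      obtain ⟨t, htl, hts⟩ := List.mem_iff_getElem.1 hmem
      refine ⟨t, by omega, ?_⟩
      beta_reduce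
      rw [List.getD_eq_getElem _ _ htl, hts, hs3]
    · intro t ht
      have htl : t < (gray N k).length - 1 := by omega
      have h0 := List.chain'_iff_get.1 (chain'_gray N k) t htl
      have h1 : t < (gray N k).length := by omega
      have h2 : t + 1 < (gray N k).length := by omega
      beta_reduce
      rw [List.getD_eq_getElem _ _ h1, List.getD_eq_getElem _ _ h2]
      have hs1 := (mem_gray (List.getElem_mem h1)).1
      have hs2 := (mem_gray (List.getElem_mem h2)).1
      rw [hamming_toBV hs1 hs2]
      simpa [List.get_eq_getElem] using h0
    · have hM1 : 1 ≤ N.choose k := Nat.choose_pos hkN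
      rw [Finset.sum_congr rfl (fun t ht => ?_), Finset.sum_const,
        Finset.card_range, smul_eq_mul, Nat.mul_comm]
      · rw [Finset.mem_range] at ht
        have htl : t < (gray N k).length - 1 := by omega
        have h0 := List.chain'_iff_get.1 (chain'_gray N k) t htl
        have h1 : t < (gray N k).length := by omega
        have h2 : t + 1 < (gray N k).length := by omega
        beta_reduce
        rw [List.getD_eq_getElem _ _ h1, List.getD_eq_getElem _ _ h2]
        have hs1 := (mem_gray (List.getElem_mem h1)).1
        have hs2 := (mem_gray (List.getElem_mem h2)).1
        rw [hamming_toBV hs1 hs2]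
        simpa [List.get_eq_getElem] using h0
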